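/- If V is a finite-dimensional F_q-subspace of a field L containing F_q, then the polynomial e_V(X) = X · ∏_{0 ≠ v ∈ V} (1 − X/v) ∈ L[X] is F_q-linear as a function on any field extension of L: e_V(x + y) = e_V(x) + e_V(y) and e_V(c·x) = c·e_V(x) for all c ∈ F_q. -/

import Mathlib

open Polynomial

/-- The polynomial `e_V(X) = X · ∏_{0 ≠ v ∈ s} (1 - X/v)`, where the finset `s`
enumerates the nonzero elements of a finite `𝔽_q`-subspace `V` of `L`. -/
noncomputable def latticePoly {L : Type*} [Field L] (s : Finset L) : Polynomial L :=
  Polynomial.X * ∏ v ∈ s, (1 - Polynomial.C v⁻¹ * Polynomial.X)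

/-- If `V` is a finite-dimensional `𝔽_q`-subspace of a field `L` containing
`𝔽_q`, then `e_V(X) = X·∏_{0≠v∈V}(1 − X/v)` is `𝔽_q`-linear as a function on any field
extension `M` of `L`: `e_V(x+y) = e_V(x) + e_V(y)` and `e_V(c·x) = c·e_V(x)` for `c ∈ 𝔽_q`. -/
theorem latticePoly_linear (p n : ℕ) [Fact p.Prime] (hn : n ≠ 0) (q : ℕ) (hq : q = p ^ n)
    (L : Type*) [Field L] [CharP L p] [Algebra (GaloisField p n) L]
    (V : Submodule (GaloisField p n) L) (s : Finset L)
    (hs : ∀ v : L, v ∈ s ↔ (v ∈ V ∧ v ≠ 0))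
    (M : Type*) [Field M] [Algebra L M] [Algebra (GaloisField p n) M]
    [IsScalarTower (GaloisField p n) L M] :
    (∀ x y : M, Polynomial.aeval (x + y) (latticePoly s) =
        Polynomial.aeval x (latticePoly s) + Polynomial.aeval y (latticePoly s)) ∧
    (∀ (c : GaloisField p n) (x : M), Polynomial.aeval (c • x) (latticePoly s) =
        c • Polynomial.aeval x (latticePoly s)) := by
  classical
  have h0s : (0 : L) ∉ s := fun h => ((hs 0).1 h).2 rfl
  set t : Finset L := insert 0 s with ht_def
  have ht : ∀ w : L, w ∈ t ↔ w ∈ V := by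
    intro w
    simp only [ht_def, Finset.mem_insert, hs]
    constructor
    · rintro (rfl | ⟨h, _⟩)
      · exact V.zero_mem
      · exact h
    · intro hw
      by_cases hw0 : w = 0
      · exact Or.inl hw0
      · exact Or.inr ⟨hw, hw0⟩
  set φ : L →+* M := algebraMap L M with hφdef
  have hφ : Function.Injective φ := φ.injective
  set F : M → M := fun x => ∏ w ∈ t, (x - φ w) with hF
  -- cardinality of t
  haveI : Fintype (GaloisField p n) := Fintype.ofFinite _
  have hVsub : (V : Set L) ⊆ ↑t := fun w hw => Finset.mem_coe.2 ((ht w).2 hw)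
  have hVfin : (V : Set L).Finite := Set.Finite.subset t.finite_toSet hVsub
  haveI hVfin' : Fintype (V : Set L) := hVfin.fintype
  have hcard : t.card = Fintype.card (GaloisField p n) ^
      (Module.finrank (GaloisField p n) V) := by
    have h1 : t = (V : Set L).toFinset := by
      ext w
      simp [ht w]
    rw [h1, Set.toFinset_card]
    exact Module.card_eq_pow_finrank
  have hNc : ∀ c : GaloisField p n, c ^ t.card = c := by
    intro c
    rw [hcard]
    exact FiniteField.pow_card_pow _ c
  have hcard0 : 0 < t.card := Finset.card_pos.2 ⟨0, Finset.mem_insert_self 0 s⟩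
  -- F vanishes on V
  have hFzero : ∀ v : L, v ∈ t → F (φ v) = 0 := by
    intro v hv
    exact Finset.prod_eq_zero hv (sub_self _)
  -- translation invariance of F
  have hFtrans : ∀ v : L, v ∈ V → ∀ x : M, F (x + φ v) = F x := by
    intro v hv x
    simp only [hF]
    refine Finset.prod_bij' (fun w _ => w - v) (fun w _ => w + v) ?_ ?_ ?_ ?_ ?_
    · intro w hw
      exact (ht _).2 (V.sub_mem ((ht w).1 hw) hv)
    · intro w hw
      exact (ht _).2 (V.add_mem ((ht w).1 hw) hv)
    · intro w hw; ring
    · intro w hw; ring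
    · intro w hw
      rw [map_sub]
      ring
  -- the generic polynomial Q
  set Q : M[X] := ∏ w ∈ t, (X - C (φ w)) with hQ
  have hQm : Q.Monic := monic_prod_of_monic _ _ (fun w _ => monic_X_sub_C _)
  have hQdeg : Q.natDegree = t.card := by
    rw [hQ, natDegree_prod_of_monic _ _ (fun w _ => monic_X_sub_C _)]
    simp
  have hevalQ : ∀ y : M, eval y Q = F y := by
    intro y
    rw [hQ, eval_prod]
    simp [hF]
  -- additivity of F
  have hFadd : ∀ x y : M, F (x + y) = F x + F y := by
    intro x y
    set P : M[X] := ∏ w ∈ t, (X + C (x - φ w)) with hP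
    have hPm : P.Monic := monic_prod_of_monic _ _ (fun w _ => monic_X_add_C _)
    have hPdeg : P.natDegree = t.card := by
      rw [hP, natDegree_prod_of_monic _ _ (fun w _ => monic_X_add_C _),
        Finset.sum_congr rfl (fun w _ => natDegree_X_add_C (x - φ w))]
      simp
    have hevalP : ∀ y : M, eval y P = F (x + y) := by
      intro y
      rw [hP, eval_prod]
      exact Finset.prod_congr rfl fun w _ => by
        simp only [eval_add, eval_X, eval_C]; ring
    have hPQ : degree (P - Q) < (t.card : ℕ) := by
      have h1 : degree (P - Q) < degree P := by
        refine degree_sub_lt ?_ hPm.ne_zero ?_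
        · rw [degree_eq_natDegree hPm.ne_zero, degree_eq_natDegree hQm.ne_zero, hPdeg, hQdeg]
        · rw [hPm.leadingCoeff, hQm.leadingCoeff]
      rwa [degree_eq_natDegree hPm.ne_zero, hPdeg] at h1
    have hdeg : degree (P - Q - C (F x)) < (t.card : ℕ) := by
      refine lt_of_le_of_lt (degree_sub_le _ _) (max_lt hPQ ?_)
      refine lt_of_le_of_lt degree_C_le ?_
      exact_mod_cast hcard0
    have hh : P - Q - C (F x) = 0 := by
      by_cases h0 : P - Q - C (F x) = 0
      · exact h0
      · refine eq_zero_of_natDegree_lt_card_of_eval_eq_zero' _ (t.image φ) ?_ ?_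
        · intro z hz
          obtain ⟨v, hv, rfl⟩ := Finset.mem_image.1 hz
          simp only [eval_sub, eval_C, hevalP, hevalQ]
          rw [hFtrans v ((ht v).1 hv), hFzero v hv]
          ring
        · rw [Finset.card_image_of_injective _ hφ]
          exact (natDegree_lt_iff_degree_lt h0).2 hdeg
    have := congrArg (eval y) hh
    simp only [eval_sub, eval_C, hevalP, hevalQ, eval_zero] at this
    linear_combination this
  -- homogeneity of F
  have hFsmul : ∀ (c : GaloisField p n) (x : M),
      F (algebraMap (GaloisField p n) M c * x) = algebraMap (GaloisField p n) M c * F x := by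
    intro c x
    by_cases hc : c = 0
    · have hF0 : F 0 = 0 := Finset.prod_eq_zero (Finset.mem_insert_self 0 s) (by simp)
      simp [hc, hF0]
    · set cM : M := algebraMap (GaloisField p n) M c with hcMdef
      have hcM : cM ≠ 0 := fun h => hc ((_root_.map_eq_zero (algebraMap (GaloisField p n) M)).1 h)
      have hcMN : cM ^ t.card = cM := by
        rw [hcMdef, ← map_pow, hNc c]
      set R : M[X] := ∏ w ∈ t, (X - C (cM⁻¹ * φ w)) with hR
      have hRm : R.Monic := monic_prod_of_monic _ _ (fun w _ => monic_X_sub_C _)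
      have hRdeg : R.natDegree = t.card := by
        rw [hR, natDegree_prod_of_monic _ _ (fun w _ => monic_X_sub_C _),
          Finset.sum_congr rfl (fun w _ => natDegree_X_sub_C (cM⁻¹ * φ w))]
        simp
      have key : (∏ w ∈ t, (C cM * X - C (φ w))) = C cM * R := by
        have h1 : ∀ w ∈ t, C cM * X - C (φ w) = C cM * (X - C (cM⁻¹ * φ w)) := by
          intro w _
          rw [mul_sub, ← C_mul, mul_inv_cancel_left₀ hcM]
        rw [Finset.prod_congr rfl h1, Finset.prod_mul_distrib, Finset.prod_const,
          ← C_pow, hcMN]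
      have hevalP' : ∀ y : M, eval y (∏ w ∈ t, (C cM * X - C (φ w))) = F (cM * y) := by
        intro y
        rw [eval_prod]
        simp [hF]
      have hRQ : degree (R - Q) < (t.card : ℕ) := by
        have h1 : degree (R - Q) < degree R := by
          refine degree_sub_lt ?_ hRm.ne_zero ?_
          · rw [degree_eq_natDegree hRm.ne_zero, degree_eq_natDegree hQm.ne_zero, hRdeg, hQdeg]
          · rw [hRm.leadingCoeff, hQm.leadingCoeff]
        rwa [degree_eq_natDegree hRm.ne_zero, hRdeg] at h1
      have hdeg : degree (C cM * (R - Q)) < (t.card : ℕ) := by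
        rcases eq_or_ne (R - Q) 0 with h0 | h0
        · rw [h0, mul_zero, degree_zero]
          exact_mod_cast WithBot.bot_lt_coe _
        · rw [degree_mul, degree_C hcM, zero_add]
          exact hRQ
      have hh : C cM * (R - Q) = 0 := by
        by_cases h0 : C cM * (R - Q) = 0
        · exact h0
        · refine eq_zero_of_natDegree_lt_card_of_eval_eq_zero' _ (t.image φ) ?_ ?_
          · intro z hz
            obtain ⟨v, hv, rfl⟩ := Finset.mem_image.1 hz
            have h3 : F (cM * φ v) = cM * eval (φ v) R := by
              rw [← hevalP' (φ v), key]
              simp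
            have h5 : cM * φ v = φ (c • v) := by
              rw [Algebra.smul_def, map_mul, ← IsScalarTower.algebraMap_apply]
            have h6 : F (cM * φ v) = 0 := by
              rw [h5]
              exact hFzero _ ((ht _).2 (V.smul_mem c ((ht v).1 hv)))
            have h7 : F (φ v) = 0 := hFzero v hv
            simp only [eval_mul, eval_sub, eval_C, hevalQ]
            linear_combination h6 - h3 - cM * h7
          · rw [Finset.card_image_of_injective _ hφ]
            exact (natDegree_lt_iff_degree_lt h0).2 hdeg
      have h3 : F (cM * x) = cM * eval x R := by
        rw [← hevalP' x, key]
        simp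
      have h4 : cM * (eval x R - F x) = 0 := by
        have := congrArg (eval x) hh
        simpa only [eval_mul, eval_sub, eval_C, eval_zero, hevalQ] using this
      linear_combination h3 + h4
  -- relate latticePoly to F
  have hlat : ∀ x : M, aeval x (latticePoly s) = (∏ v ∈ s, (-(φ v)⁻¹)) * F x := by
    intro x
    rw [latticePoly, map_mul, aeval_X, map_prod]
    have h1 : ∀ v ∈ s, aeval x (1 - C v⁻¹ * X) = -(φ v)⁻¹ * (x - φ v) := by
      intro v hv
      have hv0 : v ≠ 0 := ((hs v).1 hv).2
      have hφv : φ v ≠ 0 := fun h => hv0 (hφ (by simpa using h))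
      simp only [map_sub, map_one, map_mul, aeval_C, aeval_X]
      rw [hφdef] at hφv ⊢
      rw [map_inv₀]
      field_simp
      ring
    rw [Finset.prod_congr rfl h1, Finset.prod_mul_distrib]
    have hFx : F x = x * ∏ v ∈ s, (x - φ v) := by
      rw [hF]
      simp only [ht_def, Finset.prod_insert h0s, map_zero, sub_zero]
    rw [hFx]
    ring
  constructor
  · intro x y
    rw [hlat, hlat, hlat, hFadd]
    ring
  · intro c x
    rw [Algebra.smul_def c x, hlat, hFsmul, Algebra.smul_def, hlat]
    ring
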